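/- Nonexistence of singular arcs: let J be an invertible real 3×3 matrix, Ω : [0,t_f] → ℝ³ continuous, and λ^Ω, λ^R : [0,t_f] → ℝ³ differentiable (with λ̇^Ω continuous) satisfying the multiplier equations J λ̇^Ω + J(Ω × λ^Ω) − (JΩ) × λ^Ω + λ^R = 0 and λ̇^R + Ω × λ^R = 0 on [0,t_f]. If λ^Ω vanishes identically on some nondegenerate subinterval [a,b] ⊆ [0,t_f] with a < b, then λ^Ω ≡ 0 and λ^R ≡ 0 on all of [0,t_f]; consequently, for any u : [0,t_f] → ℝ³, the transversality condition 1 + λ^Ω(t_f)·(u(t_f) − Ω(t_f) × J Ω(t_f)) + λ^R(t_f)·Ω(t_f) = 0 cannot hold. -/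

import Mathlib

open Matrix


lemma norm_cross_le (a c : Fin 3 → ℝ) : ‖a ⨯₃ c‖ ≤ 2 * ‖a‖ * ‖c‖ := by
  rw [pi_norm_le_iff_of_nonneg (by positivity)]
  intro i
  have h1 : ∀ j, |a j| ≤ ‖a‖ := fun j => norm_le_pi_norm a j
  have h2 : ∀ j, |c j| ≤ ‖c‖ := fun j => norm_le_pi_norm c j
  have ha : 0 ≤ ‖a‖ := norm_nonneg _
  have hc : 0 ≤ ‖c‖ := norm_nonneg _
  fin_cases i <;> simp [crossProduct, Real.norm_eq_abs] <;>
  · calc |_| ≤ _ := abs_sub _ _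
      _ ≤ 2 * ‖a‖ * ‖c‖ := by
        rw [abs_mul, abs_mul]
        nlinarith [h1 0, h1 1, h1 2, h2 0, h2 1, h2 2, abs_nonneg (a 0), abs_nonneg (a 1),
          abs_nonneg (a 2), abs_nonneg (c 0), abs_nonneg (c 1), abs_nonneg (c 2)]

lemma norm_mulVec_le (M : Matrix (Fin 3) (Fin 3) ℝ) (x : Fin 3 → ℝ) :
    ‖M *ᵥ x‖ ≤ (∑ i, ∑ j, |M i j|) * ‖x‖ := by
  rw [pi_norm_le_iff_of_nonneg (by positivity)]
  intro i
  have : ‖(M *ᵥ x) i‖ ≤ ∑ j, |M i j| * ‖x‖ := by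
    rw [Matrix.mulVec, dotProduct]
    refine (norm_sum_le _ _).trans (Finset.sum_le_sum fun j _ => ?_)
    rw [Real.norm_eq_abs, abs_mul]
    exact mul_le_mul_of_nonneg_left (norm_le_pi_norm x j) (abs_nonneg _)
  refine this.trans ?_
  rw [← Finset.sum_mul]
  refine mul_le_mul_of_nonneg_right ?_ (norm_nonneg _)
  exact Finset.single_le_sum (f := fun i => ∑ j, |M i j|) (fun i _ => by positivity)
    (Finset.mem_univ i)

noncomputable def vfAux (tf : ℝ) (J : Matrix (Fin 3) (Fin 3) ℝ) (Ω : ℝ → Fin 3 → ℝ)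
    (t : ℝ) (y : (Fin 3 → ℝ) × (Fin 3 → ℝ)) : (Fin 3 → ℝ) × (Fin 3 → ℝ) :=
  if t ∈ Set.Icc 0 tf then
    (-(Ω t ⨯₃ y.1) + J⁻¹ *ᵥ ((J *ᵥ Ω t) ⨯₃ y.1) - J⁻¹ *ᵥ y.2, -(Ω t ⨯₃ y.2))
  else 0

lemma vfAux_zero (tf : ℝ) (J : Matrix (Fin 3) (Fin 3) ℝ) (Ω : ℝ → Fin 3 → ℝ) (t : ℝ) :
    vfAux tf J Ω t 0 = 0 := by
  unfold vfAux
  split <;> simp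

lemma vfAux_sub (tf : ℝ) (J : Matrix (Fin 3) (Fin 3) ℝ) (Ω : ℝ → Fin 3 → ℝ) (t : ℝ)
    (x y : (Fin 3 → ℝ) × (Fin 3 → ℝ)) :
    vfAux tf J Ω t (x - y) = vfAux tf J Ω t x - vfAux tf J Ω t y := by
  unfold vfAux
  split
  · simp only [Prod.fst_sub, Prod.snd_sub, map_sub, Matrix.mulVec_sub, Prod.mk_sub_mk,
      Prod.mk.injEq]
    constructor <;> abel
  · simp


/-- Nonexistence of singular arcs.  Let `J` be invertible, `Ω` continuous, and let
`λ^Ω, λ^R : [0,t_f] → ℝ³` satisfy the multiplier equations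
`J λ̇^Ω + J(Ω × λ^Ω) − (JΩ) × λ^Ω + λ^R = 0` and `λ̇^R + Ω × λ^R = 0`, with `λ̇^Ω`
continuous.  If `λ^Ω` vanishes identically on a nondegenerate subinterval
`[a,b] ⊆ [0,t_f]`, then `λ^Ω ≡ 0` and `λ^R ≡ 0` on `[0,t_f]`; consequently the
transversality condition `1 + λ^Ω(t_f)·(u(t_f) − Ω(t_f) × JΩ(t_f)) + λ^R(t_f)·Ω(t_f) = 0`
cannot hold for any control `u`. -/
theorem no_singular_arc (tf : ℝ) (htf : 0 ≤ tf)
    (J : Matrix (Fin 3) (Fin 3) ℝ) (hJ : IsUnit J)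
    (Ω : ℝ → Fin 3 → ℝ) (lΩ lΩ' lR : ℝ → Fin 3 → ℝ)
    (hΩ : ContinuousOn Ω (Set.Icc 0 tf))
    (hlΩ : ∀ t ∈ Set.Icc 0 tf, HasDerivAt lΩ (lΩ' t) t)
    (hlΩ' : ContinuousOn lΩ' (Set.Icc 0 tf))
    (heq1 : ∀ t ∈ Set.Icc 0 tf,
      J *ᵥ lΩ' t + J *ᵥ (Ω t ⨯₃ lΩ t) - (J *ᵥ Ω t) ⨯₃ lΩ t + lR t = 0)
    (heq2 : ∀ t ∈ Set.Icc 0 tf, HasDerivAt lR (-(Ω t ⨯₃ lR t)) t)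
    (a b : ℝ) (ha : a ∈ Set.Icc 0 tf) (hb : b ∈ Set.Icc 0 tf) (hab : a < b)
    (hsing : ∀ t ∈ Set.Icc a b, lΩ t = 0) :
    (∀ t ∈ Set.Icc 0 tf, lΩ t = 0 ∧ lR t = 0) ∧
    ∀ u : ℝ → Fin 3 → ℝ,
      ¬ (1 + lΩ tf ⬝ᵥ (u tf - Ω tf ⨯₃ (J *ᵥ Ω tf)) + lR tf ⬝ᵥ Ω tf = 0) := by
  have hJdet : IsUnit J.det := (Matrix.isUnit_iff_isUnit_det J).mp hJ
  have key : ∀ x : Fin 3 → ℝ, J⁻¹ *ᵥ (J *ᵥ x) = x := fun x => by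
    rw [Matrix.mulVec_mulVec, Matrix.nonsing_inv_mul J hJdet, Matrix.one_mulVec]
  set c : ℝ := (a + b) / 2 with hcdef
  have hcab : c ∈ Set.Ioo a b := ⟨by simp only [hcdef]; linarith, by simp only [hcdef]; linarith⟩
  have hcI : c ∈ Set.Icc 0 tf := ⟨by linarith [ha.1, hcab.1.le], by linarith [hb.2, hcab.2.le]⟩
  have hlΩc : lΩ c = 0 := hsing c ⟨hcab.1.le, hcab.2.le⟩
  -- derivative of lΩ at c is zero
  have hd0 : lΩ' c = 0 := by
    have hev : lΩ =ᶠ[nhds c] fun _ => (0 : Fin 3 → ℝ) := by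
      filter_upwards [Ioo_mem_nhds hcab.1 hcab.2] with t ht
      exact hsing t ⟨ht.1.le, ht.2.le⟩
    have h1 : HasDerivAt lΩ (0 : Fin 3 → ℝ) c :=
      (hasDerivAt_const c (0 : Fin 3 → ℝ)).congr_of_eventuallyEq hev
    exact (hlΩ c hcI).unique h1
  -- lR c = 0
  have hlRc : lR c = 0 := by
    have h := heq1 c hcI
    rw [hd0, hlΩc] at h
    simpa using h
  -- the ODE setup
  obtain ⟨C, hC, hC0⟩ : ∃ C, (∀ t ∈ Set.Icc 0 tf, ‖Ω t‖ ≤ C) ∧ 0 ≤ C := by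
    obtain ⟨C₀, hC₀⟩ := isCompact_Icc.exists_bound_of_continuousOn hΩ
    exact ⟨max C₀ 0, fun t ht => (hC₀ t ht).trans (le_max_left _ _), le_max_right _ _⟩
  obtain ⟨SJ, hJb, hSJ0⟩ : ∃ S, (∀ x : Fin 3 → ℝ, ‖J *ᵥ x‖ ≤ S * ‖x‖) ∧ 0 ≤ S :=
    ⟨∑ i, ∑ j, |J i j|, norm_mulVec_le J, by positivity⟩
  obtain ⟨D, hDb, hD0⟩ : ∃ S, (∀ x : Fin 3 → ℝ, ‖J⁻¹ *ᵥ x‖ ≤ S * ‖x‖) ∧ 0 ≤ S :=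
    ⟨∑ i, ∑ j, |J⁻¹ i j|, norm_mulVec_le J⁻¹, by positivity⟩
  obtain ⟨K, hKdef, hK0⟩ : ∃ K, K = 2 * C + 2 * D * SJ * C + D ∧ 0 ≤ K :=
    ⟨_, rfl, by positivity⟩
  -- norm bound for the vector field
  have hvnorm : ∀ t (z : (Fin 3 → ℝ) × (Fin 3 → ℝ)), ‖vfAux tf J Ω t z‖ ≤ K * ‖z‖ := by
    intro t z
    unfold vfAux
    split
    case isTrue ht =>
      rw [Prod.norm_def, max_le_iff]
      have hz1 : ‖z.1‖ ≤ ‖z‖ := norm_fst_le z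
      have hz2 : ‖z.2‖ ≤ ‖z‖ := norm_snd_le z
      have hz0 : (0:ℝ) ≤ ‖z‖ := norm_nonneg _
      have hΩt : ‖Ω t‖ ≤ C := hC t ht
      have hcr1 : ‖Ω t ⨯₃ z.1‖ ≤ 2 * C * ‖z‖ := by
        refine (norm_cross_le _ _).trans ?_
        have := norm_nonneg (Ω t)
        nlinarith [norm_nonneg z.1]
      have hcr2 : ‖Ω t ⨯₃ z.2‖ ≤ 2 * C * ‖z‖ := by
        refine (norm_cross_le _ _).trans ?_
        have := norm_nonneg (Ω t)
        nlinarith [norm_nonneg z.2]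
      have hJΩ : ‖J *ᵥ Ω t‖ ≤ SJ * C := by
        refine (hJb (Ω t)).trans ?_
        exact mul_le_mul_of_nonneg_left hΩt hSJ0
      have hterm2 : ‖J⁻¹ *ᵥ ((J *ᵥ Ω t) ⨯₃ z.1)‖ ≤ 2 * D * SJ * C * ‖z‖ := by
        refine (hDb _).trans ?_
        have h1 : ‖(J *ᵥ Ω t) ⨯₃ z.1‖ ≤ 2 * (SJ * C) * ‖z.1‖ := by
          refine (norm_cross_le _ _).trans ?_
          have := norm_nonneg (J *ᵥ Ω t)
          nlinarith [norm_nonneg z.1]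
        calc D * ‖(J *ᵥ Ω t) ⨯₃ z.1‖ ≤ D * (2 * (SJ * C) * ‖z.1‖) :=
              mul_le_mul_of_nonneg_left h1 hD0
          _ = 2 * D * SJ * C * ‖z.1‖ := by ring
          _ ≤ 2 * D * SJ * C * ‖z‖ := mul_le_mul_of_nonneg_left hz1 (by positivity)
      have hterm3 : ‖J⁻¹ *ᵥ z.2‖ ≤ D * ‖z‖ := by
        refine (hDb _).trans ?_
        exact mul_le_mul_of_nonneg_left hz2 hD0
      constructor
      · calc ‖-(Ω t ⨯₃ z.1) + J⁻¹ *ᵥ ((J *ᵥ Ω t) ⨯₃ z.1) - J⁻¹ *ᵥ z.2‖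
            ≤ ‖-(Ω t ⨯₃ z.1) + J⁻¹ *ᵥ ((J *ᵥ Ω t) ⨯₃ z.1)‖ + ‖J⁻¹ *ᵥ z.2‖ := norm_sub_le _ _
          _ ≤ ‖-(Ω t ⨯₃ z.1)‖ + ‖J⁻¹ *ᵥ ((J *ᵥ Ω t) ⨯₃ z.1)‖ + ‖J⁻¹ *ᵥ z.2‖ := by
              have := norm_add_le (-(Ω t ⨯₃ z.1)) (J⁻¹ *ᵥ ((J *ᵥ Ω t) ⨯₃ z.1))
              linarith
          _ ≤ K * ‖z‖ := by
              rw [norm_neg, hKdef]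
              linarith [hcr1, hterm2, hterm3]
      · rw [norm_neg, hKdef]
        have hpos : (0:ℝ) ≤ (2 * D * SJ * C + D) * ‖z‖ := by positivity
        nlinarith [hcr2]
    case isFalse ht =>
      rw [norm_zero]
      positivity
  -- Lipschitz
  have hlip : ∀ t, LipschitzOnWith K.toNNReal (vfAux tf J Ω t)
      (Set.univ : Set ((Fin 3 → ℝ) × (Fin 3 → ℝ))) := by
    intro t
    refine (LipschitzWith.of_dist_le_mul fun x y => ?_).lipschitzOnWith
    rw [dist_eq_norm, dist_eq_norm, ← vfAux_sub]
    calc ‖vfAux tf J Ω t (x - y)‖ ≤ K * ‖x - y‖ := hvnorm t (x - y)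
      _ = (K.toNNReal : ℝ) * ‖x - y‖ := by rw [Real.coe_toNNReal K hK0]
  -- solutions
  set f : ℝ → (Fin 3 → ℝ) × (Fin 3 → ℝ) := fun t => (lΩ t, lR t) with hfdef
  have hderiv : ∀ t ∈ Set.Icc 0 tf, HasDerivAt f (vfAux tf J Ω t (f t)) t := by
    intro t ht
    have h1 : HasDerivAt f (lΩ' t, -(Ω t ⨯₃ lR t)) t := (hlΩ t ht).prodMk (heq2 t ht)
    have heqd : lΩ' t = -(Ω t ⨯₃ lΩ t) + J⁻¹ *ᵥ ((J *ᵥ Ω t) ⨯₃ lΩ t) - J⁻¹ *ᵥ lR t := by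
      have h := heq1 t ht
      have h3 : J *ᵥ lΩ' t = -(J *ᵥ (Ω t ⨯₃ lΩ t)) + ((J *ᵥ Ω t) ⨯₃ lΩ t - lR t) := by
        rw [← sub_eq_zero, ← h]
        abel
      calc lΩ' t = J⁻¹ *ᵥ (J *ᵥ lΩ' t) := (key _).symm
        _ = _ := by
            rw [h3]
            simp only [Matrix.mulVec_add, Matrix.mulVec_sub, Matrix.mulVec_neg, key]
            abel
    have : vfAux tf J Ω t (f t) = (lΩ' t, -(Ω t ⨯₃ lR t)) := by
      unfold vfAux
      rw [if_pos ht, heqd]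
    rw [this]
    exact h1
  have hfc : f c = 0 := by
    simp only [hfdef, hlΩc, hlRc, Prod.mk_eq_zero, and_self]
  have hcont : ContinuousOn f (Set.Icc 0 tf) := fun t ht =>
    ((hderiv t ht).continuousAt).continuousWithinAt
  -- uniqueness to the right of c
  have hright : Set.EqOn f (fun _ => 0) (Set.Icc c tf) := by
    refine ODE_solution_unique_of_mem_Icc_right (fun t _ => hlip t)
      (hcont.mono (Set.Icc_subset_Icc_left hcI.1)) ?_ (fun _ _ => Set.mem_univ _)
      continuousOn_const ?_ (fun _ _ => Set.mem_univ _) (by simpa using hfc)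
    · intro t ht
      exact (hderiv t ⟨le_trans hcI.1 ht.1, ht.2.le⟩).hasDerivWithinAt
    · intro t ht
      simpa [vfAux_zero] using (hasDerivWithinAt_const t (Set.Ici t)
        (0 : (Fin 3 → ℝ) × (Fin 3 → ℝ)))
  -- uniqueness to the left of c
  have hleft : Set.EqOn f (fun _ => 0) (Set.Icc 0 c) := by
    refine ODE_solution_unique_of_mem_Icc_left (fun t _ => hlip t)
      (hcont.mono (Set.Icc_subset_Icc_right hcI.2)) ?_ (fun _ _ => Set.mem_univ _)
      continuousOn_const ?_ (fun _ _ => Set.mem_univ _) (by simpa using hfc)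
    · intro t ht
      exact (hderiv t ⟨ht.1.le, le_trans ht.2 hcI.2⟩).hasDerivWithinAt
    · intro t ht
      simpa [vfAux_zero] using (hasDerivWithinAt_const t (Set.Iic t)
        (0 : (Fin 3 → ℝ) × (Fin 3 → ℝ)))
  have hzero : ∀ t ∈ Set.Icc 0 tf, lΩ t = 0 ∧ lR t = 0 := by
    intro t ht
    have : f t = 0 := by
      rcases le_total t c with h | h
      · exact hleft ⟨ht.1, h⟩
      · exact hright ⟨h, ht.2⟩
    exact ⟨congrArg Prod.fst this, congrArg Prod.snd this⟩
  refine ⟨hzero, fun u hu => ?_⟩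
  obtain ⟨h1, h2⟩ := hzero tf ⟨htf, le_refl tf⟩
  rw [h1, h2] at hu
  simp at hu
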